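/- arXiv:2405.12016 — 2 statements merged into one kernel-verified Lean document; each statement's English description precedes it below -/
import Mathlib

section
/- Let $e_1,\dots,e_n,e_{n+1}$ be exchangeable real-valued random variables (e.g., i.i.d.). Let $\hat q$ be the $\lceil (n+1)(1-\alpha)\rceil$-th smallest value among $e_1,\dots,e_n$ (assuming $\lceil (n+1)(1-\alpha)\rceil \le n$). Then $\mathbb{P}[e_{n+1} \le \hat q] \ge 1-\alpha$. -/
open MeasureTheory ProbabilityTheory

open Finset ENNReal NNReal

/-- The `k`-th smallest element of a list of reals (1-indexed). -/
noncomputable def orderStat (l : List ℝ) (k : ℕ) : ℝ :=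
  (l.insertionSort (· ≤ ·)).getD (k - 1) 0

/-- A finite family of real random variables is exchangeable if its joint law
is invariant under permutations of the indices. -/
def Exchangeable {Ω : Type*} [MeasureSpace Ω] {m : ℕ} (e : Fin m → Ω → ℝ) : Prop :=
  ∀ σ : Equiv.Perm (Fin m),
    Measure.map (fun ω => fun i => e (σ i) ω) (ℙ : Measure Ω) =
      Measure.map (fun ω => fun i => e i ω) (ℙ : Measure Ω)

theorem countP_ofFn {m : ℕ} (f : Fin m → ℝ) (p : ℝ → Bool) :
    (List.ofFn f).countP p = (Finset.univ.filter (fun i => p (f i))).card := by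
  induction m with
  | zero => simp
  | succ m ih =>
    rw [List.ofFn_succ, List.countP_cons, Fin.univ_succ, Finset.cons_eq_insert,
      Finset.filter_insert, Finset.filter_map, ih (fun i => f i.succ)]
    have hnm : (0 : Fin (m+1)) ∉ (univ.filter ((fun i : Fin (m+1) => p (f i)) ∘ Fin.succ)).map
        ⟨Fin.succ, Fin.succ_injective m⟩ := by
      simp [Fin.succ_ne_zero]
    simp only [Function.comp_def] at hnm ⊢
    by_cases h : p (f 0) <;>
      simp [h, Finset.card_insert_of_notMem hnm]

theorem le_orderStat_of_countP_lt (l : List ℝ) (k : ℕ) (hk1 : 1 ≤ k) (hkl : k ≤ l.length)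
    (x : ℝ) (h : l.countP (fun a => decide (a < x)) < k) : x ≤ orderStat l k := by
  by_contra hx
  push_neg at hx
  set s := l.insertionSort (· ≤ ·) with hs
  have hperm : List.Perm s l := List.perm_insertionSort _ l
  have hlen : s.length = l.length := hperm.length_eq
  have hsorted : s.Pairwise (· ≤ ·) := List.pairwise_insertionSort _ l
  have hk1' : k - 1 < s.length := by omega
  have hget : orderStat l k = s.get ⟨k - 1, hk1'⟩ := by
    rw [orderStat, List.getD_eq_getElem _ _ hk1']; rfl
  have hcount : k ≤ s.countP (fun a => decide (a < x)) := by
    have htake : s = s.take k ++ s.drop k := (List.take_append_drop k s).symm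
    have hlentake : (s.take k).length = k := by
      rw [List.length_take]; omega
    have hall : ∀ a ∈ s.take k, a < x := by
      intro a ha
      obtain ⟨i, hi, hia⟩ := List.getElem_of_mem ha
      rw [List.getElem_take] at hia
      have hi' : i < s.length := by omega
      have : s[i] ≤ s.get ⟨k - 1, hk1'⟩ := by
        apply hsorted.rel_get_of_le
        simp [Fin.le_def]; omega
      subst hia
      calc s[i] ≤ s.get ⟨k-1, hk1'⟩ := this
        _ < x := by rw [← hget]; exact hx
    calc k = (s.take k).length := hlentake.symm
      _ = (s.take k).countP (fun a => decide (a < x)) := by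
          symm; rw [List.countP_eq_length]
          intro a ha; simpa using hall a ha
      _ ≤ s.countP (fun a => decide (a < x)) := by
          conv_rhs => rw [htake]
          rw [List.countP_append]; omega
  rw [hperm.countP_eq] at hcount
  omega

theorem counting_lemma {m k : ℕ} (hk : k ≤ m) (v : Fin m → ℝ) :
    k ≤ (univ.filter (fun i => (univ.filter (fun j => v j < v i)).card < k)).card := by
  by_contra hT
  push_neg at hT
  set T := univ.filter (fun i => (univ.filter (fun j => v j < v i)).card < k) with hTdef
  have hC : (Tᶜ : Finset (Fin m)).Nonempty := by
    rw [← Finset.card_pos, Finset.card_compl]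
    have : T.card < k := hT
    have hm : (univ : Finset (Fin m)).card = m := by simp
    have hm2 : Fintype.card (Fin m) = m := Fintype.card_fin m
    omega
  obtain ⟨i₀, hi₀, hmin⟩ := Tᶜ.exists_min_image v hC
  have hi₀k : k ≤ (univ.filter (fun j => v j < v i₀)).card := by
    have := hi₀
    simp only [Finset.mem_compl, hTdef, Finset.mem_filter, Finset.mem_univ, true_and,
      not_lt] at this
    exact this
  have hsub : (univ.filter (fun j => v j < v i₀)) ⊆ T := by
    intro j hj
    simp only [Finset.mem_filter, Finset.mem_univ, true_and] at hj
    by_contra hjT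
    have hjC : j ∈ Tᶜ := Finset.mem_compl.mpr hjT
    exact absurd hj (not_lt.mpr (hmin j hjC))
  have := Finset.card_le_card hsub
  omega

theorem measB {m k : ℕ} (i : Fin m) :
    MeasurableSet {v : Fin m → ℝ | (univ.filter (fun j => v j < v i)).card < k} := by
  have hc : Measurable (fun v : Fin m → ℝ => (univ.filter (fun j => v j < v i)).card) := by
    have : (fun v : Fin m → ℝ => (univ.filter (fun j => v j < v i)).card)
        = fun v => ∑ j, if v j < v i then 1 else 0 := by
      funext v; rw [Finset.card_filter]
    rw [this]
    exact Finset.measurable_sum _ fun j _ => Measurable.ite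
      (measurableSet_lt (measurable_pi_apply j) (measurable_pi_apply i))
      measurable_const measurable_const
  exact hc (measurableSet_lt measurable_id measurable_const : MeasurableSet {t : ℕ | t < k})

theorem card_filter_perm {m : ℕ} (σ : Equiv.Perm (Fin m)) (p : Fin m → Prop) [DecidablePred p] :
    (univ.filter (fun j => p (σ j))).card = (univ.filter p).card :=
  Finset.card_bij (fun j _ => σ j)
    (fun j hj => by simpa using (Finset.mem_filter.mp hj).2)
    (fun a ha b hb hab => σ.injective hab)
    (fun b hb => ⟨σ.symm b, by simpa using (Finset.mem_filter.mp hb).2, by simp⟩)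

/-- Split conformal prediction quantile lemma: for exchangeable
`e 0, …, e n`, the probability that `e n` is at most the `⌈(n+1)(1-α)⌉`-th
smallest among `e 0, …, e (n-1)` is at least `1 - α`. -/
theorem conformal_coverage_lower
    {Ω : Type*} [MeasureSpace Ω] [IsProbabilityMeasure (ℙ : Measure Ω)]
    {n : ℕ} (hn : 1 ≤ n) (α : ℝ) (hα : 0 < α) (hα1 : α < 1)
    (e : Fin (n + 1) → Ω → ℝ) (hmeas : ∀ i, Measurable (e i))
    (hexch : Exchangeable e)
    (k : ℕ) (hk : k = ⌈((n : ℝ) + 1) * (1 - α)⌉₊) (hkn : k ≤ n)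
    (qhat : Ω → ℝ)
    (hq : ∀ ω, qhat ω = orderStat (List.ofFn (fun i : Fin n => e i.castSucc ω)) k) :
    ENNReal.ofReal (1 - α) ≤ ℙ {ω | e (Fin.last n) ω ≤ qhat ω} := by
  have hk1 : 1 ≤ k := by
    rw [hk]
    rw [Nat.one_le_iff_ne_zero, ← Nat.pos_iff_ne_zero, Nat.ceil_pos]
    apply _root_.mul_pos (by positivity) (by linarith)
  set F : Ω → (Fin (n+1) → ℝ) := fun ω => fun i => e i ω with hF
  have hFmeas : Measurable F := measurable_pi_lambda _ hmeas
  set B : Fin (n+1) → Set (Fin (n+1) → ℝ) :=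
    fun i => {v | (univ.filter (fun j => v j < v i)).card < k} with hB
  set A : Fin (n+1) → Set Ω := fun i => F ⁻¹' B i with hA
  have hAmeas : ∀ i, MeasurableSet (A i) := fun i => hFmeas (measB i)
  -- all A i have the same probability
  have hAeq : ∀ i, ℙ (A i) = ℙ (A (Fin.last n)) := by
    intro i
    set σ : Equiv.Perm (Fin (n+1)) := Equiv.swap i (Fin.last n) with hσ
    have hσlast : σ (Fin.last n) = i := Equiv.swap_apply_right _ _
    have hFσmeas : Measurable (fun ω => fun j => e (σ j) ω) :=
      measurable_pi_lambda _ fun j => hmeas (σ j)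
    have hpre : (fun ω => fun j => e (σ j) ω) ⁻¹' (B (Fin.last n)) = A i := by
      ext ω
      simp only [hA, hB, Set.mem_preimage, Set.mem_setOf_eq, hF]
      simp only [hσlast]
      constructor <;> intro h <;>
        [rw [← card_filter_perm σ (fun j => e j ω < e i ω)]; rw [card_filter_perm σ (fun j => e j ω < e i ω)]] <;>
        exact h
    have h1 : ℙ (A i) = (Measure.map (fun ω => fun j => e (σ j) ω) ℙ) (B (Fin.last n)) := by
      rw [Measure.map_apply hFσmeas (measB (Fin.last n)), hpre]
    have h2 : (Measure.map F ℙ) (B (Fin.last n)) = ℙ (A (Fin.last n)) := by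
      rw [Measure.map_apply hFmeas (measB (Fin.last n))]
    rw [h1, hexch σ, h2]
  -- sum lower bound
  have hsum : (k : ℝ≥0∞) ≤ ∑ i : Fin (n+1), ℙ (A i) := by
    have hpt : ∀ ω, (k : ℝ≥0∞) ≤ ∑ i : Fin (n+1), (A i).indicator (1 : Ω → ℝ≥0∞) ω := by
      intro ω
      have hcard := counting_lemma (k := k) (by omega : k ≤ n+1) (fun i => e i ω)
      have : ∑ i : Fin (n+1), (A i).indicator (1 : Ω → ℝ≥0∞) ω
          = ((univ.filter (fun i : Fin (n+1) =>
              (univ.filter (fun j => e j ω < e i ω)).card < k)).card : ℝ≥0∞) := by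
        rw [Finset.card_filter]
        push_cast
        apply Finset.sum_congr rfl
        intro i _
        by_cases h : ω ∈ A i
        · have h' : (univ.filter (fun j => e j ω < e i ω)).card < k := h
          simp [Set.indicator_of_mem h, h']
        · have h' : ¬ (univ.filter (fun j => e j ω < e i ω)).card < k := h
          simp [Set.indicator_of_notMem h, h']
      rw [this]
      exact_mod_cast Nat.cast_le.mpr hcard
    calc (k : ℝ≥0∞) = ∫⁻ _, (k : ℝ≥0∞) ∂ℙ := by simp
      _ ≤ ∫⁻ ω, ∑ i : Fin (n+1), (A i).indicator (1 : Ω → ℝ≥0∞) ω ∂ℙ :=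
          lintegral_mono hpt
      _ = ∑ i : Fin (n+1), ∫⁻ ω, (A i).indicator (1 : Ω → ℝ≥0∞) ω ∂ℙ :=
          lintegral_finset_sum _ fun i _ =>
            (measurable_const.indicator (hAmeas i))
      _ = ∑ i : Fin (n+1), ℙ (A i) := by
          apply Finset.sum_congr rfl
          intro i _
          rw [lintegral_indicator_one (hAmeas i)]
  -- hence P(A last) ≥ k/(n+1) ≥ 1-α
  have hsum' : (k : ℝ≥0∞) ≤ (n+1 : ℝ≥0∞) * ℙ (A (Fin.last n)) := by
    calc (k : ℝ≥0∞) ≤ ∑ i : Fin (n+1), ℙ (A i) := hsum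
      _ = ∑ _i : Fin (n+1), ℙ (A (Fin.last n)) := Finset.sum_congr rfl fun i _ => hAeq i
      _ = (n+1 : ℝ≥0∞) * ℙ (A (Fin.last n)) := by
          rw [Finset.sum_const, Finset.card_univ, Fintype.card_fin, nsmul_eq_mul]
          push_cast; ring
  have hlast : ENNReal.ofReal (1 - α) ≤ ℙ (A (Fin.last n)) := by
    rw [← ENNReal.mul_le_mul_iff_left (a := ENNReal.ofReal (1-α)) (b := ℙ (A (Fin.last n)))
      (c := (n+1 : ℝ≥0∞)) (by simp) (by simp)]
    calc ENNReal.ofReal (1-α) * (n+1 : ℝ≥0∞)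
        = ENNReal.ofReal ((1-α) * ((n:ℝ)+1)) := by
          rw [ENNReal.ofReal_mul (by linarith)]
          congr 1
          rw [ENNReal.ofReal_add (by positivity) zero_le_one, ENNReal.ofReal_natCast,
            ENNReal.ofReal_one]
      _ ≤ (k : ℝ≥0∞) := by
          rw [← ENNReal.ofReal_natCast k]
          apply ENNReal.ofReal_le_ofReal
          rw [hk]
          calc (1-α) * ((n:ℝ)+1) = ((n:ℝ)+1) * (1-α) := by ring
            _ ≤ ⌈((n:ℝ)+1) * (1-α)⌉₊ := Nat.le_ceil _
      _ ≤ (n+1 : ℝ≥0∞) * ℙ (A (Fin.last n)) := hsum'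
      _ = ℙ (A (Fin.last n)) * (n+1 : ℝ≥0∞) := mul_comm _ _
  -- A last is contained in the event
  refine le_trans hlast (measure_mono ?_)
  intro ω hω
  simp only [hA, hB, Set.mem_preimage, Set.mem_setOf_eq, hF] at hω
  show e (Fin.last n) ω ≤ qhat ω
  rw [hq ω]
  apply le_orderStat_of_countP_lt _ k hk1
  · rw [List.length_ofFn]; exact hkn
  · rw [countP_ofFn]
    have hsub : (univ.filter (fun i : Fin n =>
        decide (e i.castSucc ω < e (Fin.last n) ω) = true)).card
        ≤ (univ.filter (fun j : Fin (n+1) => e j ω < e (Fin.last n) ω)).card := by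
      apply Finset.card_le_card_of_injOn (fun i => i.castSucc)
      · intro i hi
        simp only [Finset.mem_coe, Finset.mem_filter, Finset.mem_univ, true_and, decide_eq_true_eq] at hi ⊢
        exact hi
      · intro a _ b _ hab
        exact Fin.castSucc_injective n hab
    omega
end

section
/- For exchangeable random variables $e_1,\dots,e_{n+1}$ with almost surely no ties, the rank of $e_{n+1}$ among $e_1,\dots,e_{n+1}$ is uniformly distributed on $\{1,\dots,n+1\}$. -/
open MeasureTheory ProbabilityTheory
open scoped ENNReal

namespace RankAux

noncomputable def rnk {n : ℕ} (x : Fin (n+1) → ℝ) (j : Fin (n+1)) : ℕ :=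
  (Finset.univ.filter (fun i => x i ≤ x j)).card

lemma rnk_comp {n : ℕ} (x : Fin (n+1) → ℝ) (σ : Equiv.Perm (Fin (n+1))) (j : Fin (n+1)) :
    rnk (fun i => x (σ i)) j = rnk x (σ j) := by
  unfold rnk
  apply Finset.card_bij (fun i _ => σ i)
  · intro a ha; simp only [Finset.mem_filter, Finset.mem_univ, true_and] at ha ⊢; exact ha
  · intro a _ b _ h; exact σ.injective h
  · intro b hb
    refine ⟨σ.symm b, ?_, by simp⟩
    simp only [Finset.mem_filter, Finset.mem_univ, true_and, Equiv.apply_symm_apply] at hb ⊢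
    exact hb

lemma rnk_pos {n : ℕ} (x : Fin (n+1) → ℝ) (j : Fin (n+1)) : 1 ≤ rnk x j :=
  Finset.card_pos.mpr ⟨j, by simp⟩

lemma rnk_le {n : ℕ} (x : Fin (n+1) → ℝ) (j : Fin (n+1)) : rnk x j ≤ n + 1 := by
  calc rnk x j ≤ Finset.univ.card := Finset.card_filter_le _ _
  _ = n + 1 := by simp

lemma rnk_inj {n : ℕ} {x : Fin (n+1) → ℝ} (hx : Function.Injective x) :
    Function.Injective (rnk x) := by
  intro j k h
  by_contra hjk
  have hne : x j ≠ x k := fun h' => hjk (hx h')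
  wlog hlt : x j < x k generalizing j k
  · exact this h.symm (Ne.symm hjk) hne.symm (lt_of_le_of_ne (not_lt.mp hlt) hne.symm)
  have hsub : Finset.univ.filter (fun i => x i ≤ x j) ⊂
      Finset.univ.filter (fun i => x i ≤ x k) := by
    refine (Finset.ssubset_iff_of_subset ?_).mpr ⟨k, by simp, by simp [not_le.mpr hlt]⟩
    intro i hi
    simp only [Finset.mem_filter, Finset.mem_univ, true_and] at hi ⊢
    exact hi.trans hlt.le
  exact absurd h (Nat.ne_of_lt (Finset.card_lt_card hsub))

lemma rnk_exists {n : ℕ} {x : Fin (n+1) → ℝ} (hx : Function.Injective x)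
    {r : ℕ} (hr1 : 1 ≤ r) (hr2 : r ≤ n + 1) : ∃ j, rnk x j = r := by
  have hg : Function.Injective (fun j => (⟨rnk x j - 1, by
      have := rnk_le x j; omega⟩ : Fin (n+1))) := by
    intro a b hab
    apply rnk_inj hx
    have := rnk_pos x a; have := rnk_pos x b
    have := Fin.mk.injEq _ _ _ _ ▸ hab
    simp only [Fin.mk.injEq] at hab
    omega
  obtain ⟨j, hj⟩ := Finite.surjective_of_injective hg ⟨r - 1, by omega⟩
  refine ⟨j, ?_⟩
  have := rnk_pos x j
  have : rnk x j - 1 = r - 1 := congrArg Fin.val hj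
  omega

lemma meas_rnk {Ω : Type*} [MeasurableSpace Ω] {n : ℕ} (e : Fin (n+1) → Ω → ℝ)
    (hmeas : ∀ i, Measurable (e i)) (j : Fin (n+1)) :
    Measurable (fun ω => rnk (fun i => e i ω) j) := by
  unfold rnk
  simp_rw [Finset.card_filter]
  exact Finset.measurable_sum _ (fun i _ =>
    Measurable.ite (measurableSet_le (hmeas i) (hmeas j)) measurable_const measurable_const)

end RankAux

/-- For exchangeable random variables `e 0, …, e n` with almost surely no ties,
the rank of `e n` among all of them (number of indices `i` with
`e i ≤ e n`) is uniformly distributed on `{1, …, n+1}`. -/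
theorem rank_uniform
    {Ω : Type*} [MeasureSpace Ω] [IsProbabilityMeasure (ℙ : Measure Ω)]
    {n : ℕ}
    (e : Fin (n + 1) → Ω → ℝ) (hmeas : ∀ i, Measurable (e i))
    (hexch : Exchangeable e)
    (hnoties : ℙ {ω | ∃ i j : Fin (n + 1), i ≠ j ∧ e i ω = e j ω} = 0)
    (rank : Ω → ℕ)
    (hrank : ∀ ω, rank ω =
      (Finset.univ.filter (fun i : Fin (n + 1) => e i ω ≤ e (Fin.last n) ω)).card) :
    ∀ r ∈ Finset.Icc 1 (n + 1),
      ℙ {ω | rank ω = r} = (((n : ℝ≥0∞) + 1))⁻¹ := by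
  intro r hr
  rw [Finset.mem_Icc] at hr
  open RankAux in
  -- S j : event that the rank of e j equals r
  set S : Fin (n+1) → Set Ω := fun j => {ω | rnk (fun i => e i ω) j = r} with hS
  have hSmeas : ∀ j, MeasurableSet (S j) := fun j =>
    (meas_rnk e hmeas j) (measurableSet_singleton r)
  -- D : event of no ties
  set D : Set Ω := {ω | Function.Injective (fun i => e i ω)} with hDdef
  have hDc : Dᶜ = {ω | ∃ i j : Fin (n + 1), i ≠ j ∧ e i ω = e j ω} := by
    ext ω
    rw [Set.mem_compl_iff, hDdef]
    simp only [Set.mem_setOf_eq, Function.not_injective_iff]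
    constructor
    · rintro ⟨i, j, hij, hne⟩; exact ⟨i, j, hne, hij⟩
    · rintro ⟨i, j, hne, hij⟩; exact ⟨i, j, hij, hne⟩
  have hDcnull : ℙ Dᶜ = 0 := by rw [hDc]; exact hnoties
  have hDcmeas : MeasurableSet Dᶜ := by
    rw [hDc]
    have : {ω | ∃ i j : Fin (n + 1), i ≠ j ∧ e i ω = e j ω} =
        ⋃ i, ⋃ j, ⋃ _ : i ≠ j, {ω | e i ω = e j ω} := by
      ext ω; simp
    rw [this]
    exact MeasurableSet.iUnion fun i => MeasurableSet.iUnion fun j =>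
      MeasurableSet.iUnion fun _ => measurableSet_eq_fun (hmeas i) (hmeas j)
  have hDmeas : MeasurableSet D := by simpa using hDcmeas.compl
  have hD1 : ℙ D = 1 := by
    have := measure_add_measure_compl (μ := (ℙ : Measure Ω)) hDmeas
    rw [hDcnull, add_zero, measure_univ] at this
    exact this
  -- all events S j have the same probability as S (Fin.last n)
  have hequal : ∀ j, ℙ (S j) = ℙ (S (Fin.last n)) := by
    intro j
    have hf : Measurable (fun ω => fun i => e i ω) :=
      measurable_pi_lambda _ hmeas
    set σ : Equiv.Perm (Fin (n+1)) := Equiv.swap (Fin.last n) j with hσ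
    have hfσ : Measurable (fun ω => fun i => e (σ i) ω) :=
      measurable_pi_lambda _ (fun i => hmeas (σ i))
    have hT : MeasurableSet {x : Fin (n+1) → ℝ | rnk x (Fin.last n) = r} :=
      (meas_rnk (fun i (x : Fin (n+1) → ℝ) => x i)
        (fun i => measurable_pi_apply i) (Fin.last n)) (measurableSet_singleton r)
    have h1 := hexch σ
    have h2 : Measure.map (fun ω => fun i => e (σ i) ω) (ℙ : Measure Ω)
        {x | rnk x (Fin.last n) = r} =
        Measure.map (fun ω => fun i => e i ω) (ℙ : Measure Ω)
        {x | rnk x (Fin.last n) = r} := by rw [h1]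
    rw [Measure.map_apply hfσ hT, Measure.map_apply hf hT] at h2
    have hpre : (fun ω => fun i => e (σ i) ω) ⁻¹' {x | rnk x (Fin.last n) = r} = S j := by
      ext ω
      simp only [Set.mem_preimage, Set.mem_setOf_eq, hS]
      rw [rnk_comp (fun i => e i ω) σ (Fin.last n)]
      have : σ (Fin.last n) = j := Equiv.swap_apply_left _ _
      rw [this]
    have hpre2 : (fun ω => fun i => e i ω) ⁻¹' {x | rnk x (Fin.last n) = r}
        = S (Fin.last n) := rfl
    rw [hpre, hpre2] at h2
    exact h2
  -- the sets S j ∩ D are pairwise disjoint and cover D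
  have hdisj : Set.PairwiseDisjoint (Finset.univ : Finset (Fin (n+1)))
      (fun j => S j ∩ D) := by
    intro a _ b _ hab
    refine Set.disjoint_left.mpr ?_
    rintro ω ⟨ha, hωD⟩ ⟨hb, _⟩
    exact hab (rnk_inj hωD (ha.trans hb.symm))
  have hcover : ⋃ j ∈ (Finset.univ : Finset (Fin (n+1))), (S j ∩ D) = D := by
    apply Set.eq_of_subset_of_subset
    · intro ω hω
      simp only [Set.mem_iUnion] at hω
      obtain ⟨j, -, -, hωD⟩ := hω
      exact hωD
    · intro ω hωD
      obtain ⟨j, hj⟩ := rnk_exists hωD hr.1 hr.2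
      exact Set.mem_biUnion (Finset.mem_univ j) ⟨hj, hωD⟩
  have hsum : ∑ j : Fin (n+1), ℙ (S j ∩ D) = 1 := by
    rw [← measure_biUnion_finset hdisj (fun j _ => (hSmeas j).inter hDmeas), hcover, hD1]
  have hSD : ∀ j, ℙ (S j ∩ D) = ℙ (S j) := fun j => measure_inter_conull hDcnull
  have hsum2 : ∑ j : Fin (n+1), ℙ (S (Fin.last n)) = 1 := by
    rw [← hsum]; exact Finset.sum_congr rfl fun j _ => by rw [hSD j, hequal j]
  rw [Finset.sum_const, Finset.card_univ, Fintype.card_fin, nsmul_eq_mul] at hsum2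
  have hrankS : {ω | rank ω = r} = S (Fin.last n) := by
    ext ω; simp only [Set.mem_setOf_eq, hS, hrank ω, rnk]
  rw [hrankS]
  have : ((n : ℝ≥0∞) + 1) = ((n + 1 : ℕ) : ℝ≥0∞) := by push_cast; ring
  rw [this]
  exact ENNReal.eq_inv_of_mul_eq_one_left (by rwa [mul_comm] at hsum2)
end
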